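/- arXiv:1502.06315 — 3 statements merged into one kernel-verified Lean document; each statement's English description precedes it below -/
import Mathlib

section
/- Let φ: ℝⁿ × ℝᵖ → ℝ be a continuous convex function and (x̄, ȳ) ∈ ℝⁿ × ℝᵖ. If the partial function x ↦ φ(x, ȳ) is Fréchet differentiable at x̄ and y ↦ φ(x̄, y) is Fréchet differentiable at ȳ, then φ is Fréchet differentiable at (x̄, ȳ). -/
open Asymptotics Filter Topology

theorem frechet_of_partial_frechet_convex
    (n p : ℕ) (φ : EuclideanSpace ℝ (Fin n) × EuclideanSpace ℝ (Fin p) → ℝ)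
    (hconv : ConvexOn ℝ Set.univ φ) (hcont : Continuous φ)
    (xb : EuclideanSpace ℝ (Fin n)) (yb : EuclideanSpace ℝ (Fin p))
    (hx : DifferentiableAt ℝ (fun x => φ (x, yb)) xb)
    (hy : DifferentiableAt ℝ (fun y => φ (xb, y)) yb) :
    DifferentiableAt ℝ φ (xb, yb) := by
  obtain ⟨A, hA⟩ : ∃ A, HasFDerivAt (fun x => φ (x, yb)) A xb := ⟨_, hx.hasFDerivAt⟩
  obtain ⟨B, hB⟩ : ∃ B, HasFDerivAt (fun y => φ (xb, y)) B yb := ⟨_, hy.hasFDerivAt⟩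
  rw [hasFDerivAt_iff_isLittleO_nhds_zero] at hA hB
  have main : HasFDerivAt φ
      (A.comp (ContinuousLinearMap.fst ℝ (EuclideanSpace ℝ (Fin n)) (EuclideanSpace ℝ (Fin p))) +
       B.comp (ContinuousLinearMap.snd ℝ (EuclideanSpace ℝ (Fin n)) (EuclideanSpace ℝ (Fin p))))
      (xb, yb) := by
    rw [hasFDerivAt_iff_isLittleO_nhds_zero]
    have T1 : Tendsto (fun z : EuclideanSpace ℝ (Fin n) × EuclideanSpace ℝ (Fin p) =>
        (2:ℝ) • z.1) (𝓝 0) (𝓝 0) :=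
      (continuous_fst.const_smul (2:ℝ)).tendsto' 0 0 (by simp)
    have T2 : Tendsto (fun z : EuclideanSpace ℝ (Fin n) × EuclideanSpace ℝ (Fin p) =>
        (2:ℝ) • z.2) (𝓝 0) (𝓝 0) :=
      (continuous_snd.const_smul (2:ℝ)).tendsto' 0 0 (by simp)
    have T3 : Tendsto (fun z : EuclideanSpace ℝ (Fin n) × EuclideanSpace ℝ (Fin p) =>
        (-2:ℝ) • z.1) (𝓝 0) (𝓝 0) :=
      (continuous_fst.const_smul (-2:ℝ)).tendsto' 0 0 (by simp)
    have T4 : Tendsto (fun z : EuclideanSpace ℝ (Fin n) × EuclideanSpace ℝ (Fin p) =>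
        (-2:ℝ) • z.2) (𝓝 0) (𝓝 0) :=
      (continuous_snd.const_smul (-2:ℝ)).tendsto' 0 0 (by simp)
    have O1 : (fun z : EuclideanSpace ℝ (Fin n) × EuclideanSpace ℝ (Fin p) => (2:ℝ) • z.1)
        =O[𝓝 0] (fun z => z) := by
      refine IsBigO.of_bound 2 (Eventually.of_forall fun z => ?_)
      have := norm_fst_le z
      rw [norm_smul]
      simp only [Real.norm_ofNat]
      nlinarith [norm_nonneg z]
    have O2 : (fun z : EuclideanSpace ℝ (Fin n) × EuclideanSpace ℝ (Fin p) => (2:ℝ) • z.2)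
        =O[𝓝 0] (fun z => z) := by
      refine IsBigO.of_bound 2 (Eventually.of_forall fun z => ?_)
      have := norm_snd_le z
      rw [norm_smul]
      simp only [Real.norm_ofNat]
      nlinarith [norm_nonneg z]
    have O3 : (fun z : EuclideanSpace ℝ (Fin n) × EuclideanSpace ℝ (Fin p) => (-2:ℝ) • z.1)
        =O[𝓝 0] (fun z => z) := by
      refine IsBigO.of_bound 2 (Eventually.of_forall fun z => ?_)
      have := norm_fst_le z
      rw [norm_smul]
      simp only [norm_neg, Real.norm_ofNat]
      nlinarith [norm_nonneg z]
    have O4 : (fun z : EuclideanSpace ℝ (Fin n) × EuclideanSpace ℝ (Fin p) => (-2:ℝ) • z.2)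
        =O[𝓝 0] (fun z => z) := by
      refine IsBigO.of_bound 2 (Eventually.of_forall fun z => ?_)
      have := norm_snd_le z
      rw [norm_smul]
      simp only [norm_neg, Real.norm_ofNat]
      nlinarith [norm_nonneg z]
    have u1 : (fun z : EuclideanSpace ℝ (Fin n) × EuclideanSpace ℝ (Fin p) =>
        φ (xb + (2:ℝ) • z.1, yb) - φ (xb, yb) - A ((2:ℝ) • z.1)) =o[𝓝 0] (fun z => z) := by
      exact (hA.comp_tendsto T1).trans_isBigO O1
    have u2 : (fun z : EuclideanSpace ℝ (Fin n) × EuclideanSpace ℝ (Fin p) =>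
        φ (xb, yb + (2:ℝ) • z.2) - φ (xb, yb) - B ((2:ℝ) • z.2)) =o[𝓝 0] (fun z => z) := by
      exact (hB.comp_tendsto T2).trans_isBigO O2
    have u3 : (fun z : EuclideanSpace ℝ (Fin n) × EuclideanSpace ℝ (Fin p) =>
        φ (xb + (-2:ℝ) • z.1, yb) - φ (xb, yb) - A ((-2:ℝ) • z.1)) =o[𝓝 0] (fun z => z) := by
      exact (hA.comp_tendsto T3).trans_isBigO O3
    have u4 : (fun z : EuclideanSpace ℝ (Fin n) × EuclideanSpace ℝ (Fin p) =>
        φ (xb, yb + (-2:ℝ) • z.2) - φ (xb, yb) - B ((-2:ℝ) • z.2)) =o[𝓝 0] (fun z => z) := by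
      exact (hB.comp_tendsto T4).trans_isBigO O4
    have hr : (fun z : EuclideanSpace ℝ (Fin n) × EuclideanSpace ℝ (Fin p) =>
        (‖φ (xb + (2:ℝ) • z.1, yb) - φ (xb, yb) - A ((2:ℝ) • z.1)‖ +
          ‖φ (xb, yb + (2:ℝ) • z.2) - φ (xb, yb) - B ((2:ℝ) • z.2)‖) +
        (‖φ (xb + (-2:ℝ) • z.1, yb) - φ (xb, yb) - A ((-2:ℝ) • z.1)‖ +
          ‖φ (xb, yb + (-2:ℝ) • z.2) - φ (xb, yb) - B ((-2:ℝ) • z.2)‖))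
        =o[𝓝 0] (fun z => z) :=
      (u1.norm_left.add u2.norm_left).add (u3.norm_left.add u4.norm_left)
    refine IsBigO.trans_isLittleO (Asymptotics.isBigO_of_le _ fun z => ?_) hr
    set t1 := φ (xb + (2:ℝ) • z.1, yb) - φ (xb, yb) - A ((2:ℝ) • z.1) with ht1
    set t2 := φ (xb, yb + (2:ℝ) • z.2) - φ (xb, yb) - B ((2:ℝ) • z.2) with ht2
    set t3 := φ (xb + (-2:ℝ) • z.1, yb) - φ (xb, yb) - A ((-2:ℝ) • z.1) with ht3
    set t4 := φ (xb, yb + (-2:ℝ) • z.2) - φ (xb, yb) - B ((-2:ℝ) • z.2) with ht4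
    clear_value t1 t2 t3 t4
    have key : ∀ v : EuclideanSpace ℝ (Fin n) × EuclideanSpace ℝ (Fin p), φ ((xb, yb) + v) ≤
        (1/2) * φ (xb + (2:ℝ) • v.1, yb) + (1/2) * φ (xb, yb + (2:ℝ) • v.2) := by
      intro v
      have h := hconv.2 (Set.mem_univ ((xb + (2:ℝ) • v.1, yb)))
        (Set.mem_univ ((xb, yb + (2:ℝ) • v.2)))
        (by norm_num : (0:ℝ) ≤ 1/2) (by norm_num : (0:ℝ) ≤ 1/2) (by norm_num)
      have hv : (1/2 : ℝ) • ((xb + (2:ℝ) • v.1, yb) :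
            EuclideanSpace ℝ (Fin n) × EuclideanSpace ℝ (Fin p)) +
          (1/2 : ℝ) • ((xb, yb + (2:ℝ) • v.2) :
            EuclideanSpace ℝ (Fin n) × EuclideanSpace ℝ (Fin p)) = (xb, yb) + v := by
        apply Prod.ext <;> simp <;> module
      rw [hv] at h
      simpa [smul_eq_mul] using h
    have k0 : φ (xb, yb) ≤ (1/2) * φ ((xb, yb) + z) + (1/2) * φ ((xb, yb) + (-z)) := by
      have h := hconv.2 (Set.mem_univ ((xb, yb) + z)) (Set.mem_univ ((xb, yb) + (-z)))
        (by norm_num : (0:ℝ) ≤ 1/2) (by norm_num : (0:ℝ) ≤ 1/2) (by norm_num)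
      have hv : (1/2 : ℝ) • ((xb, yb) + z) + (1/2 : ℝ) • ((xb, yb) + (-z)) = (xb, yb) := by
        module
      rw [hv] at h
      simpa [smul_eq_mul] using h
    have e1 := key z
    have e2 := key (-z)
    have hneg1 : (2:ℝ) • (-z).1 = (-2:ℝ) • z.1 := by simp
    have hneg2 : (2:ℝ) • (-z).2 = (-2:ℝ) • z.2 := by simp
    rw [hneg1, hneg2] at e2
    have hA1 : A ((2:ℝ) • z.1) = 2 * A z.1 := by rw [map_smul]; simp
    have hA2 : A ((-2:ℝ) • z.1) = -(2 * A z.1) := by rw [map_smul]; simp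
    have hB1 : B ((2:ℝ) • z.2) = 2 * B z.2 := by rw [map_smul]; simp
    have hB2 : B ((-2:ℝ) • z.2) = -(2 * B z.2) := by rw [map_smul]; simp
    have hL : (A.comp (ContinuousLinearMap.fst ℝ (EuclideanSpace ℝ (Fin n))
          (EuclideanSpace ℝ (Fin p))) +
        B.comp (ContinuousLinearMap.snd ℝ (EuclideanSpace ℝ (Fin n))
          (EuclideanSpace ℝ (Fin p)))) z = A z.1 + B z.2 := by simp
    rw [hL]; simp only [Real.norm_eq_abs]
    have habs : |t1| + |t2| + (|t3| + |t4|) ≥ 0 := by positivity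
    rw [abs_of_nonneg habs, abs_le]
    constructor
    · have h1 : t3 ≤ |t3| := le_abs_self t3
      have h2 : t4 ≤ |t4| := le_abs_self t4
      have h3 : (0:ℝ) ≤ |t1| := abs_nonneg t1
      have h4 : (0:ℝ) ≤ |t2| := abs_nonneg t2
      have ht3' : t3 = φ (xb + (-2:ℝ) • z.1, yb) - φ (xb, yb) + 2 * A z.1 := by
        rw [ht3, hA2]; ring
      have ht4' : t4 = φ (xb, yb + (-2:ℝ) • z.2) - φ (xb, yb) + 2 * B z.2 := by
        rw [ht4, hB2]; ring
      have hs3 : φ (xb + (-2:ℝ) • z.1, yb) = t3 + φ (xb, yb) - 2 * A z.1 := by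
        rw [ht3']; ring
      have hs4 : φ (xb, yb + (-2:ℝ) • z.2) = t4 + φ (xb, yb) - 2 * B z.2 := by
        rw [ht4']; ring
      rw [hs3, hs4] at e2
      have hmain : -(|t1| + |t2| + (|t3| + |t4|)) ≤
          φ ((xb, yb) + z) - φ (xb, yb) - (A z.1 + B z.2) := by linarith [e2, k0]
      exact hmain
    · have h1 : t1 ≤ |t1| := le_abs_self t1
      have h2 : t2 ≤ |t2| := le_abs_self t2
      have h3 : (0:ℝ) ≤ |t3| := abs_nonneg t3
      have h4 : (0:ℝ) ≤ |t4| := abs_nonneg t4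
      have ht1' : t1 = φ (xb + (2:ℝ) • z.1, yb) - φ (xb, yb) - 2 * A z.1 := by
        rw [ht1, hA1]
      have ht2' : t2 = φ (xb, yb + (2:ℝ) • z.2) - φ (xb, yb) - 2 * B z.2 := by
        rw [ht2, hB1]
      linarith [e1]
  exact main.differentiableAt
end

section
/- Let φ: ℝⁿ × ℝᵖ → ℝ be a continuous convex function and (x̄, ȳ) ∈ ℝⁿ × ℝᵖ. Then for any subgradient ᾱ of the partial function x ↦ φ(x, ȳ) at x̄, there exists β̄ ∈ ℝᵖ such that (ᾱ, β̄) is a subgradient of φ at (x̄, ȳ). -/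
open RealInnerProductSpace

theorem partial_subgradient_extends
    (n p : ℕ) (φ : EuclideanSpace ℝ (Fin n) × EuclideanSpace ℝ (Fin p) → ℝ)
    (hconv : ConvexOn ℝ Set.univ φ) (hcont : Continuous φ)
    (xb : EuclideanSpace ℝ (Fin n)) (yb : EuclideanSpace ℝ (Fin p))
    (alphaBar : EuclideanSpace ℝ (Fin n))
    (hsub : ∀ x, φ (xb, yb) + ⟪alphaBar, x - xb⟫ ≤ φ (x, yb)) :
    ∃ betaBar : EuclideanSpace ℝ (Fin p),
      ∀ x y, φ (xb, yb) + ⟪alphaBar, x - xb⟫ + ⟪betaBar, y - yb⟫ ≤ φ (x, y) := by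
  classical
  set ψ : EuclideanSpace ℝ (Fin n) → EuclideanSpace ℝ (Fin p) → ℝ :=
    fun x y => φ (x, y) - φ (xb, yb) - ⟪alphaBar, x - xb⟫ with hψ
  set C : Set (EuclideanSpace ℝ (Fin p) × ℝ) := {z | ∃ x, ψ x z.1 < z.2} with hC
  have hCopen : IsOpen C := by
    have hrw : C = ⋃ x, {z : EuclideanSpace ℝ (Fin p) × ℝ | ψ x z.1 < z.2} := by
      ext z; simp [hC]
    rw [hrw]
    refine isOpen_iUnion fun x => ?_
    have hc : Continuous fun z : EuclideanSpace ℝ (Fin p) × ℝ => ψ x z.1 := by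
      have : Continuous fun z : EuclideanSpace ℝ (Fin p) × ℝ => φ (x, z.1) :=
        hcont.comp (continuous_const.prodMk continuous_fst)
      exact (this.sub continuous_const).sub continuous_const
    exact isOpen_lt hc continuous_snd
  have hCconv : Convex ℝ C := by
    rintro ⟨y₁, t₁⟩ ⟨x₁, h₁⟩ ⟨y₂, t₂⟩ ⟨x₂, h₂⟩ a b ha hb hab
    refine ⟨a • x₁ + b • x₂, ?_⟩
    have hcv := hconv.2 (Set.mem_univ (x₁, y₁)) (Set.mem_univ (x₂, y₂)) ha hb hab
    simp only [Prod.smul_mk, Prod.mk_add_mk, smul_eq_mul] at hcv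
    have hxb : a • xb + b • xb = xb := by rw [← add_smul, hab, one_smul]
    have heq : (a • x₁ + b • x₂) - xb = a • (x₁ - xb) + b • (x₂ - xb) := by
      rw [smul_sub, smul_sub]
      nth_rewrite 1 [← hxb]
      abel
    have hin : ⟪alphaBar, (a • x₁ + b • x₂) - xb⟫
        = a * ⟪alphaBar, x₁ - xb⟫ + b * ⟪alphaBar, x₂ - xb⟫ := by
      rw [heq, inner_add_right, real_inner_smul_right, real_inner_smul_right]
    simp only [hψ, Set.mem_setOf_eq] at h₁ h₂ ⊢
    simp only [Prod.smul_mk, Prod.mk_add_mk, smul_eq_mul]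
    have hc : a * φ (xb, yb) + b * φ (xb, yb) = φ (xb, yb) := by
      rw [← add_mul, hab, one_mul]
    rcases eq_or_lt_of_le ha with ha0 | hapos
    · have hb1 : b = 1 := by linarith
      rw [← ha0, hb1] at hcv hin ⊢
      simp only [zero_mul, one_mul, zero_add] at hcv hin ⊢
      linarith [hcv, hin, h₂]
    · nlinarith [hcv, hin, hc, mul_lt_mul_of_pos_left h₁ hapos,
        mul_le_mul_of_nonneg_left (le_of_lt h₂) hb]
  have hnot : ((yb, (0:ℝ)) : EuclideanSpace ℝ (Fin p) × ℝ) ∉ C := by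
    rintro ⟨x, hx⟩
    have h := hsub x
    simp only [hψ, Set.mem_setOf_eq] at hx
    linarith
  obtain ⟨f, hf⟩ := geometric_hahn_banach_open_point hCconv hCopen hnot
  set s : ℝ := f (0, 1) with hs
  have hdecomp : ∀ (y : EuclideanSpace ℝ (Fin p)) (t : ℝ),
      f (y, t) = f (y, 0) + t * s := by
    intro y t
    have h : ((y, t) : EuclideanSpace ℝ (Fin p) × ℝ) = (y, 0) + t • ((0 : EuclideanSpace ℝ (Fin p)), (1:ℝ)) := by
      simp [Prod.ext_iff]
    rw [h, map_add, map_smul]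
    simp [hs, smul_eq_mul]
  have key : ∀ (x : EuclideanSpace ℝ (Fin n)) (y : EuclideanSpace ℝ (Fin p)) (t : ℝ),
      ψ x y < t → f (y, 0) + t * s < f (yb, 0) := by
    intro x y t ht
    have h := hf (y, t) ⟨x, ht⟩
    rwa [hdecomp, hdecomp, zero_mul, add_zero] at h
  have hs_neg : s < 0 := by
    rcases lt_trichotomy s 0 with h | h | h
    · exact h
    · exfalso
      have := key xb yb (ψ xb yb + 1) (by linarith)
      rw [h, mul_zero] at this; linarith
    · exfalso
      set T : ℝ := max (ψ xb yb + 1) 1 with hT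
      have hT1 : ψ xb yb < T := lt_of_lt_of_le (by linarith) (le_max_left _ _)
      have hT2 : (1:ℝ) ≤ T := le_max_right _ _
      have h1 := key xb yb T hT1
      have h2 := key xb yb (T + (f (yb,0) - f (yb,0)) ) (by linarith)
      -- from h1 : f(yb,0) + T*s < f(yb,0), so T*s < 0, but T ≥ 1, s > 0
      nlinarith
  -- limiting inequality
  have main : ∀ (x : EuclideanSpace ℝ (Fin n)) (y : EuclideanSpace ℝ (Fin p)),
      f (y, 0) + (ψ x y) * s ≤ f (yb, 0) := by
    intro x y
    by_contra hcon
    push_neg at hcon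
    -- f(y,0) + ψ*s > f(yb,0); choose t = ψ + ε with ε = (f(y,0)+ψ*s - f(yb,0))/(-2s) ... 
    set D : ℝ := f (y, 0) + (ψ x y) * s - f (yb, 0) with hD
    have hDpos : 0 < D := by simp [hD]; linarith
    have h2s : (0:ℝ) < 2 * -s := by linarith
    have hε : (0:ℝ) < D / (2 * -s) := div_pos hDpos h2s
    have hsne : s ≠ 0 := hs_neg.ne
    obtain ⟨ε, hεpos, hεs⟩ : ∃ ε > 0, ε * s = -(D / 2) :=
      ⟨D / (2 * -s), hε, by field_simp⟩
    have h := key x y (ψ x y + ε) (by linarith)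
    nlinarith [h, hεs]
  -- construct betaBar
  set g : EuclideanSpace ℝ (Fin p) →L[ℝ] ℝ := f.comp (ContinuousLinearMap.inl ℝ _ ℝ) with hg
  set b : EuclideanSpace ℝ (Fin p) := (InnerProductSpace.toDual ℝ _).symm g with hb
  have hbg : ∀ y, ⟪b, y⟫ = f (y, 0) := by
    intro y
    rw [hb, InnerProductSpace.toDual_symm_apply]
    simp [hg]
  refine ⟨(-s)⁻¹ • b, fun x y => ?_⟩
  have hm := main x y
  have hinner : ⟪(-s)⁻¹ • b, y - yb⟫ = (-s)⁻¹ * (f (y,0) - f (yb,0)) := by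
    rw [real_inner_smul_left, inner_sub_right, hbg, hbg]
  have hψxy : ψ x y = φ (x, y) - φ (xb, yb) - ⟪alphaBar, x - xb⟫ := by simp [hψ]
  -- from hm : f(y,0) - f(yb,0) ≤ -ψ*s = ψ*(-s)
  have h2 : f (y,0) - f (yb,0) ≤ ψ x y * (-s) := by linarith [hm]
  have h3 : (-s)⁻¹ * (f (y,0) - f (yb,0)) ≤ ψ x y := by
    have hpos : 0 < -s := by linarith
    rw [inv_mul_le_iff₀ hpos]
    linarith [h2]
  rw [hinner]
  linarith [h3, hψxy]
end

section
/- Let X ⊆ ℝⁿ be a convex set, x_l ∈ X, and let g₁,…,g_m: ℝⁿ → ℝ be convex. Partition {1,…,m} as J ∪ J¹ ∪ J² ∪ J³ with g_i(x_l) ≤ 0 for i ∈ J, g_i(x_l) = 0 for i ∈ J¹, g_i(x_l) > 0 for i ∈ J², g_i(x_l) < 0 for i ∈ J³. Suppose there are multipliers λ_i ≥ 0 for i ∈ J with λ_i g_i(x_l) = 0, λ_i ∈ [0,1] for i ∈ J¹, λ_i = 1 for i ∈ J², λ_i = 0 for i ∈ J³, and subgradients ξ_i ∈ ∂g_i(x_l)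 such that −Σᵢ λ_i ξ_i ∈ N(X, x_l). If Σ_{i ∈ J¹∪J²∪J³} max{g_i(x_l), 0} > 0, then there is no x ∈ X satisfying g_i(x_l) + ⟨ξ_i, x − x_l⟩ ≤ 0 for all i = 1,…,m. -/
open RealInnerProductSpace

theorem infeasibility_cut
    (n m : ℕ) (X : Set (EuclideanSpace ℝ (Fin n))) (hXconv : Convex ℝ X)
    (xl : EuclideanSpace ℝ (Fin n)) (hxl : xl ∈ X)
    (g : Fin m → EuclideanSpace ℝ (Fin n) → ℝ)
    (hg : ∀ i, ConvexOn ℝ Set.univ (g i))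
    (J J1 J2 J3 : Finset (Fin m))
    (hpart : ∀ i : Fin m, (i ∈ J ∧ i ∉ J1 ∧ i ∉ J2 ∧ i ∉ J3) ∨
      (i ∉ J ∧ i ∈ J1 ∧ i ∉ J2 ∧ i ∉ J3) ∨
      (i ∉ J ∧ i ∉ J1 ∧ i ∈ J2 ∧ i ∉ J3) ∨
      (i ∉ J ∧ i ∉ J1 ∧ i ∉ J2 ∧ i ∈ J3))
    (hJ : ∀ i ∈ J, g i xl ≤ 0)
    (hJ1 : ∀ i ∈ J1, g i xl = 0)
    (hJ2 : ∀ i ∈ J2, 0 < g i xl)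
    (hJ3 : ∀ i ∈ J3, g i xl < 0)
    (lam : Fin m → ℝ)
    (hlamJ : ∀ i ∈ J, 0 ≤ lam i ∧ lam i * g i xl = 0)
    (hlamJ1 : ∀ i ∈ J1, lam i ∈ Set.Icc (0 : ℝ) 1)
    (hlamJ2 : ∀ i ∈ J2, lam i = 1)
    (hlamJ3 : ∀ i ∈ J3, lam i = 0)
    (ξ : Fin m → EuclideanSpace ℝ (Fin n))
    (hξ : ∀ i, ∀ x, g i xl + ⟪ξ i, x - xl⟫ ≤ g i x)
    (hkkt : ∀ z ∈ X, ⟪-(∑ i, lam i • ξ i), z - xl⟫ ≤ 0)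
    (hpos : 0 < ∑ i ∈ J1 ∪ J2 ∪ J3, max (g i xl) 0) :
    ¬ ∃ x ∈ X, ∀ i, g i xl + ⟪ξ i, x - xl⟫ ≤ 0 := by
  rintro ⟨x, hx, hlin⟩
  have hlam_nonneg : ∀ i, 0 ≤ lam i := by
    intro i
    rcases hpart i with ⟨h,_,_,_⟩ | ⟨_,h,_,_⟩ | ⟨_,_,h,_⟩ | ⟨_,_,_,h⟩
    · exact (hlamJ i h).1
    · exact (hlamJ1 i h).1
    · rw [hlamJ2 i h]; norm_num
    · rw [hlamJ3 i h]
  have hkkt' := hkkt x hx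
  rw [inner_neg_left] at hkkt'
  have h1 : (0:ℝ) ≤ ⟪∑ i, lam i • ξ i, x - xl⟫ := by linarith
  rw [sum_inner] at h1
  simp only [real_inner_smul_left] at h1
  have hS : ∑ i, lam i * (g i xl + ⟪ξ i, x - xl⟫) ≤ 0 := by
    apply Finset.sum_nonpos
    intro i _
    exact mul_nonpos_of_nonneg_of_nonpos (hlam_nonneg i) (hlin i)
  have hsplit : ∑ i, lam i * (g i xl + ⟪ξ i, x - xl⟫)
      = ∑ i, lam i * g i xl + ∑ i, lam i * ⟪ξ i, x - xl⟫ := by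
    rw [← Finset.sum_add_distrib]
    exact Finset.sum_congr rfl fun i _ => by ring
  have hkey : ∀ i : Fin m,
      (if i ∈ J1 ∪ J2 ∪ J3 then max (g i xl) 0 else 0) = lam i * g i xl := by
    intro i
    rcases hpart i with ⟨h,h1,h2,h3⟩ | ⟨_,h,h2,h3⟩ | ⟨_,h1,h,h3⟩ | ⟨_,h1,h2,h⟩
    · rw [if_neg (by simp [h1, h2, h3]), (hlamJ i h).2]
    · rw [if_pos (by simp [h]), hJ1 i h, mul_zero]; simp
    · rw [if_pos (by simp [h]), hlamJ2 i h, one_mul, max_eq_left (hJ2 i h).le]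
    · rw [if_pos (by simp [h]), hlamJ3 i h, zero_mul,
        max_eq_right (hJ3 i h).le]
  have hsum : ∑ i ∈ J1 ∪ J2 ∪ J3, max (g i xl) 0 = ∑ i, lam i * g i xl := by
    rw [← Finset.univ_inter (J1 ∪ J2 ∪ J3), ← Finset.sum_ite_mem]
    exact Finset.sum_congr rfl fun i _ => hkey i
  linarith
end
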